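/- Let ħ > 0, e ≠ 0 real, l ∈ ℕ, n ∈ ℕ with n ≥ l + 1, and set α = e^2/(ħ^2 n) and E = - e^4/(2 ħ^2 n^2). Then there exists a real polynomial p with natDegree p = n - l - 1 and p(0) ≠ 0 such that the function u(r) = r^{l+1} · p(r) · exp(-α r) satisfies, for every r > 0, the radial Coulomb Schrödinger equation -(ħ^2/2) u''(r) + ( -e^2/r + ħ^2 l(l+1)/(2 r^2) ) u(r) = E u(r); in particular u(r)/r^{l+1} tends to p(0) ≠ 0 as r → 0⁺, so u behaves as the Frobenius solution u(r) ~ r^{l+1} at the regular singular point r = 0. -/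

import Mathlib

open Polynomial

noncomputable def coulC (α : ℝ) (l k : ℕ) : ℕ → ℝ
  | 0 => 1
  | j + 1 => (-2 * α * ((k : ℝ) - j)) / (((j : ℝ) + 1) * ((j : ℝ) + 2 * l + 2)) * coulC α l k j

lemma coulC_rec (α : ℝ) (l k j : ℕ) :
    ((j : ℝ) + 1) * ((j : ℝ) + 2 * l + 2) * coulC α l k (j + 1)
      = -2 * α * ((k : ℝ) - j) * coulC α l k j := by
  have h1 : ((j:ℝ)+1) ≠ 0 := by positivity
  have h2 : ((j:ℝ) + 2*l + 2) ≠ 0 := by positivity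
  rw [coulC]
  field_simp

lemma coulC_ne_zero (α : ℝ) (hα : α ≠ 0) (l k : ℕ) : ∀ j, j ≤ k → coulC α l k j ≠ 0 := by
  intro j
  induction j with
  | zero => intro _; simp [coulC]
  | succ j ih =>
    intro hj
    rw [coulC]
    have hjk : (j:ℝ) < k := by exact_mod_cast Nat.lt_of_succ_le hj
    have h1 : ((j:ℝ)+1) ≠ 0 := by positivity
    have h2 : ((j:ℝ) + 2*l + 2) ≠ 0 := by positivity
    have hnum : -2 * α * ((k:ℝ) - j) ≠ 0 := by
      apply mul_ne_zero (mul_ne_zero (by norm_num) hα)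
      linarith
    exact mul_ne_zero (div_ne_zero hnum (mul_ne_zero h1 h2)) (ih (le_of_lt (Nat.lt_of_succ_le hj)))

lemma coulC_eq_zero (α : ℝ) (l k : ℕ) : ∀ j, k < j → coulC α l k j = 0 := by
  intro j
  induction j with
  | zero => omega
  | succ j ih =>
    intro hj
    rw [coulC]
    rcases Nat.lt_or_ge k j with h | h
    · rw [ih h, mul_zero]
    · have : k = j := by omega
      subst this
      simp

noncomputable def coulP (α : ℝ) (l k : ℕ) : Polynomial ℝ :=
  ∑ j ∈ Finset.range (k+1), Polynomial.C (coulC α l k j) * Polynomial.X ^ j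

lemma coulP_coeff (α : ℝ) (l k m : ℕ) : (coulP α l k).coeff m = coulC α l k m := by
  rw [coulP, Polynomial.finset_sum_coeff]
  simp_rw [Polynomial.coeff_C_mul, Polynomial.coeff_X_pow, mul_ite, mul_one, mul_zero]
  rw [Finset.sum_ite_eq (Finset.range (k+1)) m]
  split
  · rfl
  · next h =>
    rw [coulC_eq_zero]
    simp [Finset.mem_range] at h
    omega

lemma coulP_ode (α : ℝ) (l k : ℕ) :
    Polynomial.X * (derivative (derivative (coulP α l k)))
      + Polynomial.C (2*(l:ℝ)+2) * derivative (coulP α l k)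
      - Polynomial.C (2*α) * (Polynomial.X * derivative (coulP α l k))
      + Polynomial.C (2*α*k) * (coulP α l k) = 0 := by
  ext m
  simp only [Polynomial.coeff_add, Polynomial.coeff_sub, Polynomial.coeff_C_mul,
    Polynomial.coeff_zero]
  cases m with
  | zero =>
    simp only [Polynomial.mul_coeff_zero, Polynomial.coeff_X_zero, zero_mul,
      Polynomial.coeff_derivative, coulP_coeff]
    have := coulC_rec α l k 0
    push_cast at this ⊢
    linear_combination this
  | succ j =>
    rw [Polynomial.coeff_X_mul, Polynomial.coeff_X_mul]
    simp only [Polynomial.coeff_derivative, coulP_coeff]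
    have := coulC_rec α l k (j+1)
    push_cast at this ⊢
    linear_combination this

lemma hasDerivAt_poly_exp (Q : ℝ[X]) (α r : ℝ) :
    HasDerivAt (fun x => Q.eval x * Real.exp (-α*x))
      ((derivative Q - Polynomial.C α * Q).eval r * Real.exp (-α*r)) r := by
  have h2 : HasDerivAt (fun x : ℝ => Real.exp (-α*x)) (Real.exp (-α*r) * (-α)) r := by
    simpa using ((hasDerivAt_id r).const_mul (-α)).exp
  have h : HasDerivAt (fun x => Q.eval x * Real.exp (-α*x)) _ r := (Q.hasDerivAt r).mul h2
  convert h using 1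
  simp only [Polynomial.eval_sub, Polynomial.eval_mul, Polynomial.eval_C]
  ring

lemma deriv_poly_exp (Q : ℝ[X]) (α : ℝ) :
    deriv (fun x => Q.eval x * Real.exp (-α*x))
      = fun r => (derivative Q - Polynomial.C α * Q).eval r * Real.exp (-α*r) :=
  funext fun r => (hasDerivAt_poly_exp Q α r).deriv

theorem coulomb_bound_state (hbar e : ℝ) (hhbar : 0 < hbar) (he : e ≠ 0)
    (l n : ℕ) (hn : l + 1 ≤ n) (α E : ℝ)
    (hα : α = e ^ 2 / (hbar ^ 2 * n)) (hE : E = -e ^ 4 / (2 * hbar ^ 2 * n ^ 2)) :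
    ∃ p : Polynomial ℝ, p.natDegree = n - l - 1 ∧ p.eval 0 ≠ 0 ∧
      (∀ r : ℝ, 0 < r →
        -(hbar ^ 2 / 2) *
            deriv (deriv (fun r : ℝ => r ^ (l + 1) * p.eval r * Real.exp (-α * r))) r +
          (-e ^ 2 / r + hbar ^ 2 * l * (l + 1) / (2 * r ^ 2)) *
            (r ^ (l + 1) * p.eval r * Real.exp (-α * r)) =
          E * (r ^ (l + 1) * p.eval r * Real.exp (-α * r))) ∧
      Filter.Tendsto
        (fun r : ℝ => (r ^ (l + 1) * p.eval r * Real.exp (-α * r)) / r ^ (l + 1))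
        (nhdsWithin 0 (Set.Ioi 0)) (nhds (p.eval 0)) := by
  set k := n - l - 1 with hkdef
  have hk : n = k + l + 1 := by omega
  have hn0 : (n:ℝ) ≠ 0 := by
    have : 0 < n := by omega
    exact_mod_cast this.ne'
  have hbne : hbar ≠ 0 := hhbar.ne'
  have hαne : α ≠ 0 := by
    rw [hα]
    exact div_ne_zero (pow_ne_zero 2 he) (mul_ne_zero (pow_ne_zero 2 hbne) hn0)
  set p := coulP α l k with hpdef
  have heval0 : p.eval 0 = 1 := by
    rw [← Polynomial.coeff_zero_eq_eval_zero, hpdef, coulP_coeff]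
    rfl
  refine ⟨p, ?_, ?_, ?_, ?_⟩
  · -- natDegree
    apply le_antisymm
    · rw [Polynomial.natDegree_le_iff_coeff_eq_zero]
      intro m hm
      rw [hpdef, coulP_coeff]
      exact coulC_eq_zero α l k m hm
    · apply Polynomial.le_natDegree_of_ne_zero
      rw [hpdef, coulP_coeff]
      exact coulC_ne_zero α hαne l k k le_rfl
  · rw [heval0]; norm_num
  · -- the ODE
    intro r hr
    have hrne : r ≠ 0 := hr.ne'
    set Q : ℝ[X] := Polynomial.X ^ (l+1) * p with hQdef
    have hfun : (fun r : ℝ => r ^ (l + 1) * p.eval r * Real.exp (-α * r))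
        = fun x => Q.eval x * Real.exp (-α*x) := by
      funext x
      simp [hQdef]
    rw [hfun, deriv_poly_exp, deriv_poly_exp]
    set pe := p.eval r with hpe
    set pe' := (derivative p).eval r with hpe'
    set pe'' := (derivative (derivative p)).eval r with hpe''
    have key : r * pe'' + (2*(l:ℝ)+2) * pe' - 2*α*(r*pe') + 2*α*(k:ℝ)*pe = 0 := by
      have h := congrArg (Polynomial.eval r) (coulP_ode α l k)
      simp only [Polynomial.eval_add, Polynomial.eval_sub, Polynomial.eval_mul,
        Polynomial.eval_C, Polynomial.eval_X, Polynomial.eval_zero] at h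
      linear_combination h
    have hkr : (k:ℝ) = (n:ℝ) - l - 1 := by
      have : (n:ℝ) = (k:ℝ) + l + 1 := by exact_mod_cast hk
      linarith
    have key2 : r * pe'' + (2*(l:ℝ)+2) * pe' - 2*α*(r*pe') + 2*α*((n:ℝ)-l-1)*pe = 0 := by
      rw [← hkr]; exact key
    have hl1 : (l:ℝ) * (r^(l-1) * r) = (l:ℝ) * r^l := by
      cases l with
      | zero => simp
      | succ m => push_cast [pow_succ]; ring
    have hA : Q.eval r = r^(l+1) * pe := by simp [hQdef, hpe]
    have hQd : derivative Q = Polynomial.C ((l:ℝ)+1) * Polynomial.X^l * p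
        + Polynomial.X^(l+1) * derivative p := by
      simp [hQdef, Polynomial.derivative_mul, Polynomial.derivative_X_pow]
    have hB : (derivative Q).eval r = ((l:ℝ)+1) * r^l * pe + r^(l+1) * pe' := by
      rw [hQd]; simp [hpe, hpe']
    have hC : r * (derivative (derivative Q)).eval r
        = (l:ℝ)*((l:ℝ)+1)*r^l*pe + 2*((l:ℝ)+1)*r^(l+1)*pe' + r^(l+2)*pe'' := by
      rw [hQd]
      simp only [Polynomial.derivative_add, Polynomial.derivative_mul, Polynomial.derivative_C,
        Polynomial.derivative_X_pow, Polynomial.eval_add, Polynomial.eval_mul,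
        Polynomial.eval_C, Polynomial.eval_pow, Polynomial.eval_X, Nat.add_sub_cancel,
        zero_mul, zero_add]
      push_cast
      linear_combination (((l:ℝ)+1) * pe) * hl1 + (r^(l+1) * r - r^(l+2)) * pe''
    have he2 : e^2 = α * hbar^2 * n := by
      rw [hα]; field_simp
    have hE' : E = -(hbar^2 * α^2)/2 := by
      rw [hE, hα]; field_simp
    have hexp : Real.exp (-α*r) ≠ 0 := Real.exp_ne_zero _
    simp only [Polynomial.derivative_sub, Polynomial.derivative_mul, Polynomial.derivative_C,
      zero_mul, zero_add, Polynomial.eval_sub, Polynomial.eval_mul, Polynomial.eval_C]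
    rw [hE']
    have he2' : -e^2 = -(α * hbar^2 * n) := by rw [he2]
    rw [show -e^2/r = -(α*hbar^2*n)/r by rw [← he2']]
    simp only [neg_mul]
    field_simp
    linear_combination (1 : ℝ) *
      ((-r) * hC + (2*α*r^2) * hB + (-(α^2*r^2)) * hA
        + (-(r^(l+2))) * key2)
  · -- Tendsto
    have hcont : Continuous fun r : ℝ => p.eval r * Real.exp (-α*r) := by
      exact (Polynomial.continuous p).mul ((Real.continuous_exp).comp (continuous_const.mul continuous_id))
    have t1 : Filter.Tendsto (fun r : ℝ => p.eval r * Real.exp (-α*r))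
        (nhdsWithin 0 (Set.Ioi 0)) (nhds (p.eval 0)) := by
      have h0 := hcont.tendsto 0
      simp only [mul_zero, Real.exp_zero, mul_one] at h0
      exact h0.mono_left nhdsWithin_le_nhds
    refine t1.congr' ?_
    filter_upwards [self_mem_nhdsWithin] with r hr
    have hrne : r ≠ 0 := (Set.mem_Ioi.mp hr).ne'
    field_simp
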